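/- If a group G has property P_nai and N is a normal amenable subgroup of G, then N = {1}. -/

import Mathlib

/-- `NaiPair f g` : the subgroup generated by `f` and `g` is canonically isomorphic to
the free product `⟨f⟩ ∗ ⟨g⟩`, i.e. the natural map from the free product of the cyclic
subgroups generated by `f` and `g` to the ambient group is injective. -/
def NaiPair {G : Type*} [Group G] (f g : G) : Prop :=
  Function.Injective
    (Monoid.Coprod.lift (Subgroup.zpowers f).subtype (Subgroup.zpowers g).subtype)

/-- Property `P_nai` of Bekka–Cowling–de la Harpe. -/
def PNai (G : Type*) [Group G] : Prop :=
  ∀ F : Finset G, (∀ f ∈ F, f ≠ 1) →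
    ∃ g₀ : G, ¬ IsOfFinOrder g₀ ∧ ∀ f ∈ F, NaiPair f g₀

/-- A discrete group is amenable iff it admits a left-invariant finitely additive
probability measure defined on all subsets. -/
def IsAmenable (G : Type*) [Group G] : Prop :=
  ∃ m : Set G → ℝ, m Set.univ = 1 ∧ (∀ A : Set G, 0 ≤ m A) ∧
    (∀ A B : Set G, Disjoint A B → m (A ∪ B) = m A + m B) ∧
    (∀ (g : G) (A : Set G), m ((g * ·) '' A) = m A)


lemma isAmenable_of_injective {H K : Type*} [Group H] [Group K] (φ : H →* K)
    (hφ : Function.Injective φ) (hK : IsAmenable K) : IsAmenable H := by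
  classical
  obtain ⟨m, hm1, hm0, hmadd, hminv⟩ := hK
  set R := φ.range with hR
  let q : K → K := fun k => (@Quotient.mk'' _ (QuotientGroup.rightRel R) k).out
  have hqrel : ∀ k : K, k * (q k)⁻¹ ∈ R := by
    intro k
    exact (QuotientGroup.rightRel_apply).mp (Quotient.mk_out' k)
  have hqmul : ∀ (h : H) (k : K), q (φ h * k) = q k := by
    intro h k
    have hrel : QuotientGroup.rightRel R (φ h * k) k := by
      rw [QuotientGroup.rightRel_apply]
      have : k * (φ h * k)⁻¹ = (φ h)⁻¹ := by group
      rw [this]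
      exact inv_mem ⟨h, rfl⟩
    simp only [q, Quotient.sound' hrel]
  let S : Set H → Set K := fun A => {k : K | k * (q k)⁻¹ ∈ φ '' A}
  have hSuniv : S Set.univ = Set.univ := by
    ext k
    simp only [S, Set.mem_setOf_eq, Set.image_univ, Set.mem_univ, iff_true]
    exact hqrel k
  have hSunion : ∀ A B, S (A ∪ B) = S A ∪ S B := by
    intro A B
    ext k
    simp only [S, Set.mem_setOf_eq, Set.image_union, Set.mem_union]
  have hSdisj : ∀ A B : Set H, Disjoint A B → Disjoint (S A) (S B) := by
    intro A B hAB
    rw [Set.disjoint_left]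
    rintro k ⟨a, ha, hak⟩ ⟨b, hb, hbk⟩
    have : a = b := hφ (hak.trans hbk.symm)
    subst this
    exact (Set.disjoint_left.mp hAB ha) hb
  have hSmul : ∀ (h : H) (A : Set H), S ((h * ·) '' A) = (φ h * ·) '' (S A) := by
    intro h A
    have hq' : ∀ k : K, q ((φ h)⁻¹ * k) = q k := by
      intro k
      have := hqmul h⁻¹ k
      rwa [map_inv] at this
    ext k
    constructor
    · rintro ⟨a', ⟨a, ha, rfl⟩, hak⟩
      refine ⟨(φ h)⁻¹ * k, ?_, by group⟩
      show (φ h)⁻¹ * k * (q ((φ h)⁻¹ * k))⁻¹ ∈ φ '' A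
      rw [hq' k]
      refine ⟨a, ha, ?_⟩
      rw [map_mul] at hak
      have h5 : (φ h)⁻¹ * k * (q k)⁻¹ = (φ h)⁻¹ * (k * (q k)⁻¹) := by group
      rw [h5, ← hak]
      group
    · rintro ⟨k', hk', rfl⟩
      obtain ⟨a, ha, hak⟩ := hk'
      show φ h * k' * (q (φ h * k'))⁻¹ ∈ φ '' ((h * ·) '' A)
      rw [hqmul h k']
      exact ⟨h * a, ⟨a, ha, rfl⟩, by rw [map_mul, hak]; group⟩
  refine ⟨fun A => m (S A), ?_, fun A => hm0 _, ?_, ?_⟩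
  · show m (S Set.univ) = 1
    rw [hSuniv, hm1]
  · intro A B hAB
    show m (S (A ∪ B)) = m (S A) + m (S B)
    rw [hSunion, hmadd _ _ (hSdisj A B hAB)]
  · intro h A
    show m (S ((h * ·) '' A)) = m (S A)
    rw [hSmul, hminv]

lemma not_isAmenable_of_paradox {H : Type*} [Group H] (a : Fin 3 → H) (W : Fin 3 → Set H)
    (hdisj : ∀ i j, i ≠ j → Disjoint (W i) (W j))
    (hmove : ∀ i x, x ∉ W i → a i * x ∈ W i) : ¬ IsAmenable H := by
  rintro ⟨m, hm1, hm0, hmadd, hminv⟩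
  have mono : ∀ {A B : Set H}, A ⊆ B → m A ≤ m B := by
    intro A B hAB
    have : m B = m A + m (B \ A) := by
      rw [← hmadd _ _ disjoint_sdiff_self_right, Set.union_diff_cancel hAB]
    have h0 := hm0 (B \ A)
    linarith
  have hcompl : ∀ A : Set H, m A + m Aᶜ = 1 := by
    intro A
    rw [← hmadd _ _ disjoint_compl_right, Set.union_compl_self, hm1]
  have hhalf : ∀ i, 1 - m (W i) ≤ m (W i) := by
    intro i
    have h1 : (a i * ·) '' (W i)ᶜ ⊆ W i := by
      rintro _ ⟨x, hx, rfl⟩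
      exact hmove i x hx
    have h2 := mono h1
    rw [hminv] at h2
    have h3 := hcompl (W i)
    linarith
  have hsum : m (W 0 ∪ W 1 ∪ W 2) = m (W 0) + m (W 1) + m (W 2) := by
    rw [hmadd _ _ (Disjoint.union_left (hdisj 0 2 (by decide)) (hdisj 1 2 (by decide))),
      hmadd _ _ (hdisj 0 1 (by decide))]
  have hle : m (W 0 ∪ W 1 ∪ W 2) ≤ 1 := by
    have := mono (Set.subset_univ (W 0 ∪ W 1 ∪ W 2))
    linarith [hm1]
  have := hhalf 0
  have := hhalf 1
  have := hhalf 2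
  linarith


open Monoid Monoid.CoprodI

universe u

def TwoFam (A B : Type u) : Bool → Type u := fun b => Bool.rec A B b

instance TwoFam.instGroup {A B : Type u} [Group A] [Group B] :
    ∀ b, Group (TwoFam A B b)
  | false => inferInstanceAs (Group A)
  | true => inferInstanceAs (Group B)

instance TwoFam.instDecEq {A B : Type u} [DecidableEq A] [DecidableEq B] :
    ∀ b, DecidableEq (TwoFam A B b)
  | false => inferInstanceAs (DecidableEq A)
  | true => inferInstanceAs (DecidableEq B)

section head
variable {ι : Type*} {M : ι → Type*} [∀ i, Monoid (M i)] [DecidableEq ι]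
  [∀ i, DecidableEq (M i)]

lemma coprodI_equiv_apply (x : CoprodI M) : Word.equiv x = x • Word.empty := rfl

lemma coprodI_equiv_one : Word.equiv (1 : CoprodI M) = Word.empty := by
  rw [coprodI_equiv_apply, one_smul]

lemma coprodI_equiv_mul (g x : CoprodI M) :
    Word.equiv (g * x) = g • Word.equiv x := by
  rw [coprodI_equiv_apply, coprodI_equiv_apply, mul_smul]

lemma fstIdx_equiv_one : (Word.equiv (1 : CoprodI M)).fstIdx = none := by
  rw [coprodI_equiv_one]; rfl

lemma fstIdx_equiv_mul_of {i : ι} {m : M i} (hm : m ≠ 1) {x : CoprodI M}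
    (hx : (Word.equiv x).fstIdx ≠ some i) :
    (Word.equiv (CoprodI.of m * x)).fstIdx = some i := by
  rw [coprodI_equiv_mul, ← Word.cons_eq_smul (m := m) (ls := Word.equiv x)
    (h1 := hx) (h2 := hm)]
  exact Word.fstIdx_cons _ _ _ _

lemma fstIdx_equiv_of {i : ι} {m : M i} (hm : m ≠ 1) :
    (Word.equiv (CoprodI.of m : CoprodI M)).fstIdx = some i := by
  have := fstIdx_equiv_mul_of (M := M) hm (x := 1)
    (by rw [fstIdx_equiv_one]; simp)
  rwa [mul_one] at this

lemma eq_one_of_equiv_toList_nil {x : CoprodI M}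
    (hx : (Word.equiv x).toList = []) : x = 1 := by
  apply Word.equiv.injective
  rw [coprodI_equiv_one]
  exact Word.ext hx

end head

section FreeBits
variable {A B : Type u} [Group A] [Group B]

/-- The letter `t` in the two-generator free product. -/
def Tof (A : Type u) [Group A] {B : Type u} [Group B] (t' : B) :
    CoprodI (TwoFam A B) :=
  CoprodI.of (M := TwoFam A B) (i := true) t'

/-- The image of one letter of a word in the free product of three copies of `A`. -/
def gm (t' : B) (q : Σ _ : Fin 3, A) : CoprodI (TwoFam A B) :=
  Tof A t' ^ ((q.1 : ℕ) : ℤ) * CoprodI.of (M := TwoFam A B) (i := false) q.2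
    * (Tof A t' ^ ((q.1 : ℕ) : ℤ))⁻¹

lemma Tof_zpow (t' : B) (k : ℤ) :
    Tof A t' ^ k = CoprodI.of (M := TwoFam A B) (i := true) (t' ^ k) :=
  (map_zpow (CoprodI.of (M := TwoFam A B) (i := true)) t' k).symm

variable [DecidableEq A] [DecidableEq B]

lemma Tof_fstIdx (t' : B) (ht' : ∀ k : ℤ, k ≠ 0 → t' ^ k ≠ 1) (k : ℤ) :
    (Word.equiv (Tof A t' ^ k)).fstIdx ≠ some false := by
  rcases eq_or_ne k 0 with rfl | hk
  · rw [zpow_zero, fstIdx_equiv_one]; simp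
  · have hfi := fstIdx_equiv_of (M := TwoFam A B) (i := true) (m := t' ^ k) (ht' k hk)
    rw [Tof_zpow, hfi]; simp

lemma gm_key (t' : B) (ht' : ∀ k : ℤ, k ≠ 0 → t' ^ k ≠ 1) :
    ∀ (l : List (Σ _ : Fin 3, A)) (p : Σ _ : Fin 3, A),
      (∀ q ∈ p :: l, q.2 ≠ 1) → List.Chain' (fun q r => q.1 ≠ r.1) (p :: l) →
      (Word.equiv ((Tof A t' ^ ((p.1 : ℕ) : ℤ))⁻¹ * ((p :: l).map (gm t')).prod)).fstIdx
        = some false := by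
  intro l
  induction l with
  | nil =>
    intro p hne _
    have hexpr : (Tof A t' ^ ((p.1 : ℕ) : ℤ))⁻¹ * (([p]).map (gm t')).prod
        = CoprodI.of (M := TwoFam A B) (i := false) p.2
          * (Tof A t' ^ (-((p.1 : ℕ) : ℤ))) := by
      simp only [List.map_cons, List.map_nil, List.prod_cons, List.prod_nil, gm, mul_one]
      group
    rw [hexpr]
    exact fstIdx_equiv_mul_of (hne p (by simp)) (Tof_fstIdx t' ht' _)
  | cons q l2 ih =>
    intro p hne hchain
    have hq1 : p.1 ≠ q.1 := (List.isChain_cons_cons.mp hchain).1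
    have ihq := ih q (fun r hr => hne r (List.mem_cons_of_mem _ hr))
      (List.isChain_cons_cons.mp hchain).2
    have hk : ((q.1 : ℕ) : ℤ) - ((p.1 : ℕ) : ℤ) ≠ 0 := by
      rw [sub_ne_zero]
      intro hh
      have hv : (q.1 : ℕ) = (p.1 : ℕ) := by exact_mod_cast hh
      exact hq1 (Fin.ext hv.symm)
    have step1 : (Word.equiv (Tof A t' ^ (((q.1 : ℕ) : ℤ) - ((p.1 : ℕ) : ℤ))
        * ((Tof A t' ^ ((q.1 : ℕ) : ℤ))⁻¹ * ((q :: l2).map (gm t')).prod))).fstIdx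
          = some true := by
      rw [Tof_zpow]
      exact fstIdx_equiv_mul_of (ht' _ hk) (by rw [ihq]; simp)
    have hexpr : (Tof A t' ^ ((p.1 : ℕ) : ℤ))⁻¹ * ((p :: q :: l2).map (gm t')).prod
        = CoprodI.of (M := TwoFam A B) (i := false) p.2
          * (Tof A t' ^ (((q.1 : ℕ) : ℤ) - ((p.1 : ℕ) : ℤ))
            * ((Tof A t' ^ ((q.1 : ℕ) : ℤ))⁻¹ * ((q :: l2).map (gm t')).prod)) := by
      simp only [List.map_cons, List.prod_cons, gm]
      group
    rw [hexpr]
    exact fstIdx_equiv_mul_of (hne p (by simp)) (by rw [step1]; simp)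

lemma gm_prod_ne_one (t' : B) (ht' : ∀ k : ℤ, k ≠ 0 → t' ^ k ≠ 1)
    (p : Σ _ : Fin 3, A) (l : List (Σ _ : Fin 3, A))
    (hne : ∀ q ∈ p :: l, q.2 ≠ 1)
    (hch : List.Chain' (fun q r => q.1 ≠ r.1) (p :: l)) :
    ((p :: l).map (gm t')).prod ≠ 1 := by
  intro hone
  have := gm_key t' ht' l p hne hch
  rw [hone, mul_one] at this
  exact Tof_fstIdx t' ht' (-((p.1 : ℕ) : ℤ)) (by rwa [← zpow_neg] at this)
end FreeBits


open Monoid Monoid.CoprodI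

section MainBits
variable {G : Type u} [Group G]

/-- Conjugation embedding of `⟨f⟩` into a normal subgroup containing `f`. -/
def conjEmb (N : Subgroup G) (hN : N.Normal) {f : G} (hf : f ∈ N) (t : G) (i : Fin 3) :
    ↥(Subgroup.zpowers f) →* ↥N :=
  ((MulAut.conj (t ^ (i : ℕ))).toMonoidHom.comp (Subgroup.zpowers f).subtype).codRestrict N
    (fun a => hN.conj_mem _ (Subgroup.zpowers_le.mpr hf a.2) (t ^ (i : ℕ)))

lemma conjEmb_apply (N : Subgroup G) (hN : N.Normal) {f : G} (hf : f ∈ N) (t : G) (i : Fin 3)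
    (a : ↥(Subgroup.zpowers f)) :
    (conjEmb N hN hf t i a : G) = t ^ (i : ℕ) * a * (t ^ (i : ℕ))⁻¹ := rfl

/-- The analogous conjugation inside the abstract free product. -/
def psiI (f t : G) (i : Fin 3) :
    ↥(Subgroup.zpowers f) →* Coprod ↥(Subgroup.zpowers f) ↥(Subgroup.zpowers t) :=
  (MulAut.conj ((Coprod.inr : ↥(Subgroup.zpowers t) →* _)
    ((⟨t, Subgroup.mem_zpowers t⟩ : ↥(Subgroup.zpowers t)) ^ (i : ℕ)))).toMonoidHom.comp
    Coprod.inl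

lemma psiI_apply (f t : G) (i : Fin 3) (a : ↥(Subgroup.zpowers f)) :
    psiI f t i a = Coprod.inr ((⟨t, Subgroup.mem_zpowers t⟩ : ↥(Subgroup.zpowers t)) ^ (i : ℕ))
      * Coprod.inl a
      * (Coprod.inr ((⟨t, Subgroup.mem_zpowers t⟩ : ↥(Subgroup.zpowers t)) ^ (i : ℕ)))⁻¹ := rfl

/-- The comparison map from the two-generator free product to the abstract one. -/
def theta (A B : Type u) [Group A] [Group B] : Coprod A B →* CoprodI (TwoFam A B) :=
  Coprod.lift (CoprodI.of (M := TwoFam A B) (i := false)) (CoprodI.of (M := TwoFam A B) (i := true))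

lemma theta_psiI (f t : G) (i : Fin 3) (a : ↥(Subgroup.zpowers f)) :
    theta ↥(Subgroup.zpowers f) ↥(Subgroup.zpowers t) (psiI f t i a)
      = gm (⟨t, Subgroup.mem_zpowers t⟩ : ↥(Subgroup.zpowers t)) ⟨i, a⟩ := by
  rw [psiI_apply]
  simp only [theta, map_mul, map_inv, Coprod.lift_apply_inl, Coprod.lift_apply_inr, map_pow]
  simp only [gm, Tof, zpow_natCast]
  rfl

end MainBits

/-- In a group with property `P_nai`, every normal amenable subgroup is trivial. -/
theorem stmt9 {G : Type*} [Group G] (h : PNai G) :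
    ∀ N : Subgroup G, N.Normal → IsAmenable N → N = ⊥ := by
  intro N hN hamen
  rw [Subgroup.eq_bot_iff_forall]
  by_contra hbot
  push_neg at hbot
  obtain ⟨f, hfN, hf1⟩ := hbot
  obtain ⟨t, ht, hnai⟩ := h {f} (by simpa using hf1)
  have hφinj : Function.Injective
      (Coprod.lift (Subgroup.zpowers f).subtype (Subgroup.zpowers t).subtype) :=
    hnai f (Finset.mem_singleton_self f)
  classical
  let f' : ↥(Subgroup.zpowers f) := ⟨f, Subgroup.mem_zpowers f⟩
  let t' : ↥(Subgroup.zpowers t) := ⟨t, Subgroup.mem_zpowers t⟩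
  have hf' : f' ≠ 1 := fun hh => hf1 (congrArg Subtype.val hh)
  have ht' : ∀ k : ℤ, k ≠ 0 → t' ^ k ≠ 1 := by
    intro k hk hh
    refine ht (isOfFinOrder_iff_zpow_eq_one.mpr ⟨k, hk, ?_⟩)
    have := congrArg Subtype.val hh
    simpa using this
  -- the big hom into N and the comparison homs
  have hcomm : N.subtype.comp (CoprodI.lift (conjEmb N hN hfN t))
      = (Coprod.lift (Subgroup.zpowers f).subtype (Subgroup.zpowers t).subtype).comp
        (CoprodI.lift (psiI f t)) := by
    apply CoprodI.ext_hom
    intro i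
    ext a
    simp only [MonoidHom.comp_apply, CoprodI.lift_of, conjEmb_apply, psiI_apply,
      map_mul, map_inv, map_pow, Subgroup.coe_subtype, Coprod.lift_apply_inl,
      Coprod.lift_apply_inr]
  have hΦinj : Function.Injective (CoprodI.lift (conjEmb N hN hfN t)) := by
    rw [injective_iff_map_eq_one]
    intro x hx
    by_contra hx1
    have hΨ1 : CoprodI.lift (psiI f t) x = 1 := by
      apply hφinj
      rw [map_one]
      have h1 := DFunLike.congr_fun hcomm x
      simp only [MonoidHom.comp_apply] at h1
      rw [← h1, hx]
      rfl
    set w := Word.equiv x with hw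
    rcases hl : w.toList with _ | ⟨p, l⟩
    · exact hx1 (eq_one_of_equiv_toList_nil hl)
    · have hxprod : Word.prod w = x := Word.equiv.symm_apply_apply x
      have hlist : theta ↥(Subgroup.zpowers f) ↥(Subgroup.zpowers t)
          ((CoprodI.lift (psiI f t)) x) = ((p :: l).map (gm t')).prod := by
        calc theta _ _ ((CoprodI.lift (psiI f t)) x)
            = ((theta _ _).comp (CoprodI.lift (psiI f t))) (Word.prod w) := by
              rw [hxprod]; rfl
          _ = ((w.toList.map fun q => CoprodI.of (M := fun _ : Fin 3 => ↥(Subgroup.zpowers f)) q.2).map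
                ⇑((theta _ _).comp (CoprodI.lift (psiI f t)))).prod := by
              rw [Word.prod, map_list_prod]
          _ = ((p :: l).map (⇑((theta _ _).comp (CoprodI.lift (psiI f t))) ∘
                fun q => CoprodI.of (M := fun _ : Fin 3 => ↥(Subgroup.zpowers f)) q.2)).prod := by
              rw [hl, List.map_map]
          _ = ((p :: l).map (gm t')).prod := by
              congr 1
              apply List.map_congr_left
              intro q hq
              simp only [Function.comp_apply, MonoidHom.comp_apply, CoprodI.lift_of]
              exact theta_psiI f t q.1 q.2
      have hne1 : ((p :: l).map (gm t')).prod ≠ 1 := by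
        refine gm_prod_ne_one t' ht' p l ?_ ?_
        · intro q hq
          exact w.ne_one q (hl ▸ hq)
        · exact hl ▸ w.chain_ne
      apply hne1
      rw [← hlist, hΨ1, map_one]
  have hamen2 : IsAmenable (CoprodI (fun _ : Fin 3 => ↥(Subgroup.zpowers f))) :=
    isAmenable_of_injective _ hΦinj hamen
  refine not_isAmenable_of_paradox
    (fun i => CoprodI.of (M := fun _ : Fin 3 => ↥(Subgroup.zpowers f)) (i := i) f')
    (fun i => {x | (Word.equiv x).fstIdx = some i}) ?_ ?_ hamen2
  · intro i j hij
    rw [Set.disjoint_left]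
    intro x hx hx'
    simp only [Set.mem_setOf_eq] at hx hx'
    rw [hx] at hx'
    exact hij (Option.some_injective _ hx')
  · intro i x hx
    exact fstIdx_equiv_mul_of hf' hx
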